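/- Let Sᴸ = [[R₊ᴸ, T₋ᴸ], [T₊ᴸ, R₋ᴸ]] be a unitary 2×2 complex matrix, write R = R₋ᴸ and r = |R|, and assume R² ≠ 1. In the symmetric-potential setting where R₊ᴿ = R and T₋ᴿ = T₊ᴸ, the right-moving valley conductivity satisfies σ_I⁺ := |T₊ᴸ|²·(1 + r²)/|1 − R²|² = (1 − r⁴)/|1 − R²|². In particular, writing R = r e^{iθ}, for small r one has σ_I⁺ = 1 + 2 cos(2θ)·r² + O(r⁴), so the local conductivity can either decrease (θ = π/2) or increase (θ = 0) under a weak valley-coupling perturbation. -/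

import Mathlib

open Complex Matrix Filter Asymptotics

lemma abs_key (θ r : ℝ) :
    ‖1 - ((r : ℂ) * Complex.exp (Complex.I * θ)) ^ 2‖ ^ 2
      = 1 - 2 * Real.cos (2*θ) * r^2 + r^4 := by
  rw [Complex.sq_norm, Complex.normSq_apply, Real.cos_two_mul]
  simp [mul_comm Complex.I, Complex.exp_mul_I, pow_two, Complex.mul_re, Complex.mul_im,
    Complex.add_re, Complex.add_im, Complex.sub_re, Complex.sub_im, Complex.cos_ofReal_re,
    Complex.sin_ofReal_re]
  linear_combination (2*r^2 + r^4*(Real.sin θ^2 + Real.cos θ^2 + 1)) * Real.sin_sq_add_cos_sq θ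


/-- Let `Sᴸ = [[R₊ᴸ, T₋ᴸ], [T₊ᴸ, R₋ᴸ]]` be unitary, `R = R₋ᴸ`, `r = |R|`, `R² ≠ 1`.
In the symmetric-potential setting (`R₊ᴿ = R`, `T₋ᴿ = T₊ᴸ`), the right-moving valley
conductivity satisfies `σ_I⁺ = |T₊ᴸ|²(1 + r²)/|1 − R²|² = (1 − r⁴)/|1 − R²|²`.
In particular, writing `R = r e^{iθ}`, for small `r` one has
`σ_I⁺ = 1 + 2 cos(2θ)·r² + O(r⁴)`, so the local conductivity can either decrease
(`θ = π/2`) or increase (`θ = 0`) under a weak valley-coupling perturbation. -/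
theorem symmetric_valley_conductivity (Sl : Matrix (Fin 2) (Fin 2) ℂ)
    (hSl : Sl ∈ Matrix.unitaryGroup (Fin 2) ℂ)
    (hR : Sl 1 1 ^ 2 ≠ 1) :
    ‖Sl 1 0‖ ^ 2 * (1 + ‖Sl 1 1‖ ^ 2) /
        ‖1 - Sl 1 1 ^ 2‖ ^ 2 =
      (1 - ‖Sl 1 1‖ ^ 4) / ‖1 - Sl 1 1 ^ 2‖ ^ 2 ∧
    ∀ θ : ℝ,
      (fun r : ℝ =>
          (1 - r ^ 4) / ‖1 - ((r : ℂ) * Complex.exp (Complex.I * θ)) ^ 2‖ ^ 2 -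
            (1 + 2 * Real.cos (2 * θ) * r ^ 2)) =O[nhds (0 : ℝ)]
        (fun r : ℝ => r ^ 4) := by
  constructor
  · -- row-norm identity
    have h := hSl.2
    have h11 := congrFun (congrFun h 1) 1
    simp [Matrix.mul_apply, Fin.sum_univ_two, Matrix.one_apply, Complex.mul_conj] at h11
    have key : ‖Sl 1 0‖ ^ 2 + ‖Sl 1 1‖ ^ 2 = 1 := by
      have := congrArg Complex.re h11
      simpa [Complex.sq_norm] using this
    congr 1
    nlinarith [key]
  · intro θ
    set c := Real.cos (2*θ) with hc
    have hc1 : -1 ≤ c := Real.neg_one_le_cos _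
    have hc2 : c ≤ 1 := Real.cos_le_one _
    rw [isBigO_iff]
    refine ⟨8, ?_⟩
    filter_upwards [Metric.ball_mem_nhds (0:ℝ) (by norm_num : (0:ℝ) < 1/2)] with r hr
    simp only [Metric.mem_ball, Real.dist_eq, sub_zero] at hr
    have hr2 : r^2 ≤ 1/4 := by nlinarith [abs_nonneg r, _root_.sq_abs r]
    rw [abs_key θ r]
    set D := 1 - 2*c*r^2 + r^4 with hD
    have hDpos : (1:ℝ)/2 ≤ D := by nlinarith [sq_nonneg (r^2)]
    have hDne : D ≠ 0 := by linarith
    have heq : (1 - r^4)/D - (1 + 2*c*r^2) = (((4*c^2-2) - 2*c*r^2) * r^4)/D := by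
      field_simp
      ring
    rw [heq, Real.norm_eq_abs, Real.norm_eq_abs, abs_div, abs_mul]
    have hnum : |(4*c^2-2) - 2*c*r^2| ≤ 4 := by
      rw [abs_le]; constructor <;> nlinarith [sq_nonneg c, sq_nonneg r]
    rw [abs_of_pos (by linarith : (0:ℝ) < D)]
    rw [div_le_iff₀ (by linarith : (0:ℝ) < D)]
    have hr4 : (0:ℝ) ≤ |r^4| := abs_nonneg _
    nlinarith [hnum, hr4, hDpos, abs_nonneg ((4*c^2-2) - 2*c*r^2)]
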